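/- Let G be a group and S, T, U nonempty subsets of G. If (S, T, U) is a TPP triple, then for every permutation π of the three sets, the permuted triple is also a TPP triple; in particular both (T, U, S) and (T, S, U) are TPP triples. -/
import Mathlib


open Pointwise

/-- The right quotient `Q(X) = {x y⁻¹ : x, y ∈ X}` of a subset of a group. -/
def rightQuotient {G : Type*} [Group G] (X : Set G) : Set G :=
  {g | ∃ x ∈ X, ∃ y ∈ X, g = x * y⁻¹}

/-- Subsets `S, T, U` of a group satisfy the Triple Product Property if for all
`s ∈ Q(S)`, `t ∈ Q(T)`, `u ∈ Q(U)`, `s * t * u = 1` iff `s = t = u = 1`. -/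
def TPP {G : Type*} [Group G] (S T U : Set G) : Prop :=
  ∀ s ∈ rightQuotient S, ∀ t ∈ rightQuotient T, ∀ u ∈ rightQuotient U,
    (s * t * u = 1 ↔ s = 1 ∧ t = 1 ∧ u = 1)

lemma rightQuotient_inv_mem {G : Type*} [Group G] {X : Set G} {g : G}
    (hg : g ∈ rightQuotient X) : g⁻¹ ∈ rightQuotient X := by
  obtain ⟨x, hx, y, hy, rfl⟩ := hg
  exact ⟨y, hy, x, hx, by group⟩

lemma TPP.cyc {G : Type*} [Group G] {S T U : Set G} (h : TPP S T U) : TPP T U S := by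
  intro t ht u hu s hs
  have := h s hs t ht u hu
  constructor
  · intro e
    have hs1 : s * t * u = 1 := by
      have : s * (t * u * s) * s⁻¹ = 1 := by rw [e]; group
      calc s * t * u = s * (t * u * s) * s⁻¹ := by group
        _ = 1 := this
    obtain ⟨h1, h2, h3⟩ := this.mp hs1
    exact ⟨h2, h3, h1⟩
  · rintro ⟨rfl, rfl, rfl⟩; group

lemma TPP.rev {G : Type*} [Group G] {S T U : Set G} (h : TPP S T U) : TPP U T S := by
  intro u hu t ht s hs
  have := h s⁻¹ (rightQuotient_inv_mem hs) t⁻¹ (rightQuotient_inv_mem ht)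
    u⁻¹ (rightQuotient_inv_mem hu)
  constructor
  · intro e
    have : s⁻¹ * t⁻¹ * u⁻¹ = 1 := by
      have h1 : s⁻¹ * t⁻¹ * u⁻¹ = (u * t * s)⁻¹ := by group
      rw [e] at h1; simpa using h1
    obtain ⟨h1, h2, h3⟩ := ‹(s⁻¹ * t⁻¹ * u⁻¹ = 1 ↔ _)›.mp this
    refine ⟨?_, ?_, ?_⟩ <;> [skip; skip; skip]
    · exact inv_injective (by simpa using h3)
    · exact inv_injective (by simpa using h2)
    · exact inv_injective (by simpa using h1)
  · rintro ⟨rfl, rfl, rfl⟩; group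

theorem stmt_8 {G : Type*} [Group G] (f : Fin 3 → Set G)
    (hne : ∀ i, (f i).Nonempty) (h : TPP (f 0) (f 1) (f 2)) :
    (∀ π : Equiv.Perm (Fin 3), TPP (f (π 0)) (f (π 1)) (f (π 2))) ∧
      TPP (f 1) (f 2) (f 0) ∧ TPP (f 1) (f 0) (f 2) := by
  have h012 := h
  have h120 := h012.cyc
  have h201 := h120.cyc
  have h210 := h012.rev
  have h102 := h210.cyc
  have h021 := h102.cyc
  refine ⟨?_, h120, h102⟩
  intro π
  have h0 := π.injective
  fin_cases π <;> simpa using (by assumption : _)
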